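/- For the balanced wheel network with k ≥ 3, k ≠ 6, the torsion vector T := (|p-q| ln|a_{[p,q]}|)_{[p,q]∈E} is not in the image of D L_{Id}: there is no Φ̇ : V → ℂ with ⟨p - q, Φ̇_p - Φ̇_q⟩_ℝ / |p-q| = |p - q| ln|a_{[p,q]}| for all edges. (In particular the wheel network is closable.) -/

import Mathlib

/-- For the balanced wheel network with `k ≥ 3`, `k ≠ 6` (rim vertices
`w j = ξ^j`, `ξ = e^{2πi/k}`, center `0`, weight `1` on rim edges, weight
`-2 sin(π/k)` on spokes), the torsion vector
`T = (|p-q| ln|a_{[p,q]}|)_{[p,q]∈E}` is not in the image of `D L_{Id}`: there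
is no perturbation `(Φc, Φ)` of the vertices with
`⟨p - q, Φ̇_p - Φ̇_q⟩_ℝ / |p-q| = |p - q| ln|a_{[p,q]}|` for all edges.
In particular the wheel network is closable. -/
theorem wheel_network_closable
    (k : ℕ) (hk : 3 ≤ k) (hk6 : k ≠ 6) [NeZero k]
    (ξ : ℂ) (hξ : ξ = Complex.exp (2 * Real.pi * Complex.I / k))
    (w : ZMod k → ℂ) (hw : ∀ j : ZMod k, w j = ξ ^ (j.val)) :
    ¬ ∃ (Φc : ℂ) (Φ : ZMod k → ℂ),
      (∀ j : ZMod k,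
        ((starRingEnd ℂ (0 - w j)) * (Φc - Φ j)).re / ‖0 - w j‖
          = ‖0 - w j‖ * Real.log |(-2 * Real.sin (Real.pi / k))|) ∧
      (∀ j : ZMod k,
        ((starRingEnd ℂ (w j - w (j + 1))) * (Φ j - Φ (j + 1))).re /
            ‖w j - w (j + 1)‖
          = ‖w j - w (j + 1)‖ * Real.log |(1 : ℝ)|) := by
  rintro ⟨Φc, Φ, hs, hr⟩
  haveI : Fact (1 < k) := ⟨by omega⟩
  have hkR : (3 : ℝ) ≤ (k : ℝ) := by exact_mod_cast hk
  have hk0 : (k : ℝ) ≠ 0 := by positivity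
  have hpi := Real.pi_pos
  set θ : ℝ := 2 * Real.pi / k with hθdef
  have hθpos : 0 < θ := by positivity
  have hθlt : θ < Real.pi := by
    rw [hθdef, div_lt_iff₀ (by linarith)]
    nlinarith
  have hk0c : (k : ℂ) ≠ 0 := Nat.cast_ne_zero.mpr (NeZero.ne k)
  have hξ' : ξ = Complex.exp ((θ : ℂ) * Complex.I) := by
    rw [hξ]; congr 1; push_cast [hθdef]; field_simp
  have hre : ξ.re = Real.cos θ := by rw [hξ']; exact_mod_cast Complex.exp_ofReal_mul_I_re θ
  have him : ξ.im = Real.sin θ := by rw [hξ']; exact_mod_cast Complex.exp_ofReal_mul_I_im θ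
  have habs : ‖ξ‖ = 1 := by rw [hξ']; exact_mod_cast Complex.norm_exp_ofReal_mul_I θ
  have hξk : ξ ^ k = 1 := by
    rw [hξ, ← Complex.exp_nat_mul]
    rw [show (k : ℂ) * (2 * Real.pi * Complex.I / k) = 2 * Real.pi * Complex.I by
      field_simp]
    exact Complex.exp_two_pi_mul_I
  have hXc : (starRingEnd ℂ) ξ * ξ = 1 := by
    rw [mul_comm, Complex.mul_conj, Complex.normSq_eq_norm_sq, habs]; norm_num
  have hwabs : ∀ j : ZMod k, ‖w j‖ = 1 := by
    intro j; rw [hw, norm_pow, habs, one_pow]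
  have hwc : ∀ j : ZMod k, (starRingEnd ℂ) (w j) * w j = 1 := by
    intro j
    rw [mul_comm, Complex.mul_conj, Complex.normSq_eq_norm_sq, hwabs]; norm_num
  have hw1 : ∀ j : ZMod k, w (j + 1) = ξ * w j := by
    intro j
    rw [hw, hw, ZMod.val_add, ← pow_eq_pow_mod _ hξk, ZMod.val_one, pow_succ]
    ring
  set L : ℝ := Real.log |(-2 * Real.sin (Real.pi / k))| with hL
  set c : ZMod k → ℂ := fun j => (starRingEnd ℂ) (w j) * (Φ j - Φc) with hc
  have hcre : ∀ j : ZMod k, (c j).re = L := by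
    intro j
    have h := hs j
    have he : (starRingEnd ℂ) (0 - w j) * (Φc - Φ j) = c j := by
      simp only [hc, map_sub, map_zero]; ring
    have ha : ‖0 - w j‖ = 1 := by
      rw [zero_sub, norm_neg, hwabs]
    rw [he, ha] at h
    simpa using h
  have hψ : ∀ j : ZMod k, Φ j - Φc = w j * c j := by
    intro j
    have := hwc j
    rw [hc]
    linear_combination (-(Φ j - Φc)) * this
  have hne : ∀ j : ZMod k, w j - w (j + 1) ≠ 0 := by
    intro j
    rw [hw1 j]
    have hw0 : w j ≠ 0 := by
      intro h
      have := hwabs j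
      rw [h] at this; simp at this
    have hξ1 : ξ ≠ 1 := by
      intro h
      rw [h] at him
      have : Real.sin θ > 0 := Real.sin_pos_of_pos_of_lt_pi hθpos hθlt
      simp [Complex.one_im] at him; linarith
    intro h
    have : (1 - ξ) * w j = 0 := by rw [← h]; ring
    rcases mul_eq_zero.mp this with h1 | h2
    · exact hξ1 (sub_eq_zero.mp h1).symm
    · exact hw0 h2
  have hrimRe : ∀ j : ZMod k,
      (c j).re + (c (j + 1)).re - (ξ * c (j + 1)).re - ((starRingEnd ℂ) ξ * c j).re = 0 := by
    intro j
    have h := hr j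
    have ha : ‖w j - w (j + 1)‖ ≠ 0 := norm_ne_zero_iff.mpr (hne j)
    rw [show Real.log |(1:ℝ)| = 0 by simp, mul_zero] at h
    have h0 : ((starRingEnd ℂ) (w j - w (j + 1)) * (Φ j - Φ (j + 1))).re = 0 :=
      (div_eq_zero_iff.mp h).resolve_right ha
    have hid : (starRingEnd ℂ) (w j - w (j + 1)) * (Φ j - Φ (j + 1))
        = c j + c (j + 1) - ξ * c (j + 1) - (starRingEnd ℂ) ξ * c j := by
      have hsub : Φ j - Φ (j + 1) = w j * c j - ξ * w j * c (j + 1) := by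
        have h1 := hψ j
        have h2 := hψ (j + 1)
        rw [hw1 j] at h2
        linear_combination h1 - h2
      rw [hsub, hw1 j, map_sub, map_mul]
      linear_combination ((1 - (starRingEnd ℂ) ξ) * (c j - ξ * c (j + 1))) * hwc j
        + (c (j + 1)) * hXc
    rw [hid] at h0
    simpa [Complex.sub_re, Complex.add_re] using h0
  have hkey : ∀ j : ZMod k,
      2 * L - 2 * ξ.re * L + ξ.im * ((c (j + 1)).im - (c j).im) = 0 := by
    intro j
    have h := hrimRe j
    have e1 : (ξ * c (j + 1)).re = ξ.re * L - ξ.im * (c (j + 1)).im := by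
      rw [Complex.mul_re, hcre]
    have e2 : ((starRingEnd ℂ) ξ * c j).re = ξ.re * L + ξ.im * (c j).im := by
      rw [Complex.mul_re, Complex.conj_re, Complex.conj_im, hcre]; ring
    rw [e1, e2, hcre j, hcre (j + 1)] at h
    nlinarith [h]
  have hshift : ∑ j : ZMod k, (c (j + 1)).im = ∑ j : ZMod k, (c j).im :=
    Fintype.sum_equiv (Equiv.addRight (1 : ZMod k)) _ _ (fun j => rfl)
  have hsum : (k : ℝ) * (2 * L - 2 * ξ.re * L) = 0 := by
    have h1 : ∑ j : ZMod k,
        (2 * L - 2 * ξ.re * L + ξ.im * ((c (j + 1)).im - (c j).im)) = 0 := by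
      rw [Finset.sum_eq_zero]
      intro j _
      exact hkey j
    rw [Finset.sum_add_distrib, Finset.sum_const, ← Finset.mul_sum,
      Finset.sum_sub_distrib, hshift, sub_self, mul_zero, add_zero,
      Finset.card_univ, ZMod.card, nsmul_eq_mul] at h1
    exact h1
  have hLzero : L = 0 := by
    have h2 : 2 * L - 2 * ξ.re * L = 0 := by
      rcases mul_eq_zero.mp hsum with h | h
      · exact absurd h hk0
      · exact h
    have hcos : ξ.re < 1 := by
      rw [hre]
      calc Real.cos θ < Real.cos 0 :=
        Real.cos_lt_cos_of_nonneg_of_le_pi le_rfl (le_of_lt hθlt) hθpos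
      _ = 1 := Real.cos_zero
    have : L * (1 - ξ.re) = 0 := by linarith
    rcases mul_eq_zero.mp this with h | h
    · exact h
    · linarith
  -- Now derive a contradiction: L ≠ 0
  have hsin : 0 < Real.sin (Real.pi / k) := by
    apply Real.sin_pos_of_pos_of_lt_pi
    · positivity
    · rw [div_lt_iff₀ (by linarith)]
      nlinarith
  have habs2 : |(-2 * Real.sin (Real.pi / k))| = 2 * Real.sin (Real.pi / k) := by
    rw [abs_of_nonpos (by nlinarith)] <;> ring
  rw [hL, habs2] at hLzero
  rcases Real.log_eq_zero.mp hLzero with h | h | h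
  · linarith
  · -- 2 sin(π/k) = 1, so sin(π/k) = 1/2 = sin(π/6), forcing k = 6
    have hmem1 : Real.pi / k ∈ Set.Icc (-(Real.pi / 2)) (Real.pi / 2) := by
      constructor
      · have : 0 < Real.pi / k := by positivity
        linarith
      · rw [div_le_div_iff₀ (by linarith) (by norm_num)]
        nlinarith
    have hmem2 : Real.pi / 6 ∈ Set.Icc (-(Real.pi / 2)) (Real.pi / 2) := by
      constructor <;> [linarith; (rw [div_le_div_iff₀] <;> nlinarith)]
    have hsin6 : Real.sin (Real.pi / k) = Real.sin (Real.pi / 6) := by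
      rw [Real.sin_pi_div_six]; linarith
    have := Real.injOn_sin hmem1 hmem2 hsin6
    have hk6' : (k : ℝ) = 6 := by
      rw [div_eq_div_iff (by linarith) (by norm_num)] at this
      have := mul_left_cancel₀ (ne_of_gt hpi) this
      linarith
    exact hk6 (by exact_mod_cast hk6')
  · linarith
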